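/- Let V be a real inner product space with orthogonal almost complex structure J, and let R be an algebraic curvature tensor satisfying the AH₂ identity: R(X,Y,Z,W) = R(JX,JY,Z,W) + R(JX,Y,JZ,W) + R(JX,Y,Z,JW) for all X,Y,Z,W. Then R satisfies the AH₃ identity R(X,Y,Z,W) = R(JX,JY,JZ,JW) for all X,Y,Z,W (i.e., AH₂ ⊆ AH₃). -/

import Mathlib

open scoped RealInnerProductSpace

/-- An algebraic curvature tensor satisfying the `AH₂` identity satisfies the
`AH₃` identity (i.e. `AH₂ ⊆ AH₃`). -/
theorem stmt10 {V : Type*} [NormedAddCommGroup V] [InnerProductSpace ℝ V]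
    [FiniteDimensional ℝ V]
    (J : V →ₗ[ℝ] V) (hJ2 : ∀ X, J (J X) = -X)
    (hJg : ∀ X Y, ⟪J X, J Y⟫ = ⟪X, Y⟫)
    (R : V →ₗ[ℝ] V →ₗ[ℝ] V →ₗ[ℝ] V →ₗ[ℝ] ℝ)
    (hA1 : ∀ X Y Z W, R X Y Z W = - R Y X Z W)
    (hA2 : ∀ X Y Z W, R X Y Z W = - R X Y W Z)
    (hP : ∀ X Y Z W, R X Y Z W = R Z W X Y)
    (hB : ∀ X Y Z W, R X Y Z W + R Y Z X W + R Z X Y W = 0)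
    (hAH2 : ∀ X Y Z W, R X Y Z W =
      R (J X) (J Y) Z W + R (J X) Y (J Z) W + R (J X) Y Z (J W)) :
    ∀ X Y Z W, R X Y Z W = R (J X) (J Y) (J Z) (J W) := by
  intro X Y Z W
  have e0 := hAH2 X Y Z W
  have e1 := hAH2 (J X) (J Y) Z W
  have e2 := hAH2 (J X) Y (J Z) W
  have e3 := hAH2 (J X) Y Z (J W)
  have e4 := hAH2 (J X) (J Y) (J Z) (J W)
  have hn : ∀ A B C D : V, R (-A) B C D = - R A B C D := by
    intro A B C D; rw [show -A = (-1:ℝ) • A by simp, map_smul]; simp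
  simp only [hJ2, map_neg, LinearMap.neg_apply, neg_neg, hn] at e1 e2 e3 e4
  linarith
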